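/- Let u : ℝ → ℝ^d be continuously differentiable. Then for Lebesgue-almost every t ∈ [0,1], the function s ↦ m(u(s)) is differentiable at t, and its derivative at t equals ⟨∇p_i(u(t)), u′(t)⟩ for every index i that is active at u(t) (in particular, all active indices give the same value). -/

import Mathlib

open scoped RealInnerProductSpace
open Set MeasureTheory

/-- Chain rule for the margin along a continuously differentiable curve: almost
everywhere, the margin is differentiable and its derivative is given by any
active gradient. -/
theorem stmt_17 {d n : ℕ} (hd : 0 < d) (hn : 0 < n)
    (p : Fin n → EuclideanSpace ℝ (Fin d) → ℝ)
    (hp : ∀ i, ContDiff ℝ 1 (p i))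
    (u : ℝ → EuclideanSpace ℝ (Fin d)) (hu : ContDiff ℝ 1 u) :
    ∀ᵐ t ∂(MeasureTheory.volume.restrict (Set.Icc (0 : ℝ) 1)),
      DifferentiableAt ℝ (fun s => ⨅ j, p j (u s)) t ∧
        ∀ i, p i (u t) = (⨅ j, p j (u t)) →
          deriv (fun s => ⨅ j, p j (u s)) t = ⟪gradient (p i) (u t), deriv u t⟫ := by
  classical
  haveI : Nonempty (Fin n) := ⟨⟨0, hn⟩⟩
  set f : Fin n → ℝ → ℝ := fun j s => p j (u s) with hfdef
  have hfC : ∀ j, ContDiff ℝ 1 (f j) := fun j => (hp j).comp hu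
  set g : ℝ → ℝ := fun s => ⨅ j, f j s with hgdef
  have hbdd : ∀ s : ℝ, BddBelow (Set.range fun j => f j s) := fun s =>
    (Set.finite_range _).bddBelow
  have hmin : ∀ s : ℝ, ∃ j0, g s = f j0 s ∧ ∀ j, f j0 s ≤ f j s := by
    intro s
    obtain ⟨j0, -, hj0⟩ := Finset.exists_min_image Finset.univ (fun j => f j s)
      ⟨⟨0, hn⟩, Finset.mem_univ _⟩
    exact ⟨j0, le_antisymm (ciInf_le (hbdd s) j0)
      (le_ciInf fun j => hj0 j (Finset.mem_univ _)), fun j => hj0 j (Finset.mem_univ _)⟩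
  set S : Set ℝ := Icc (-1 : ℝ) 2 with hSdef
  -- each component is Lipschitz on S
  have hjlip : ∀ j, ∃ K : NNReal, LipschitzOnWith K (f j) S := by
    intro j
    have hcont : ContinuousOn (fun x => ‖deriv (f j) x‖) S :=
      (((hfC j).continuous_deriv le_rfl).norm).continuousOn
    obtain ⟨C, hC⟩ := isCompact_Icc.exists_bound_of_continuousOn hcont
    refine ⟨C.toNNReal, Convex.lipschitzOnWith_of_nnnorm_deriv_le
      (fun x _ => ((hfC j).differentiable one_ne_zero).differentiableAt)
      (fun x hx => ?_) (convex_Icc _ _)⟩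
    have h := hC x hx
    simp only [norm_norm] at h
    have : ‖deriv (f j) x‖₊ = (‖deriv (f j) x‖).toNNReal := by
      simp [Real.toNNReal, nnnorm]
    rw [this]
    exact Real.toNNReal_le_toNNReal h
  choose K hK using hjlip
  set Km : NNReal := Finset.univ.sup K with hKm
  have hKlip : ∀ j, LipschitzOnWith Km (f j) S := by
    intro j
    have hle : (K j : ENNReal) ≤ Km := by
      exact_mod_cast Finset.le_sup (Finset.mem_univ j)
    exact fun x hx y hy => le_trans (hK j hx hy) (mul_le_mul_of_nonneg_right hle zero_le)
  -- g is Lipschitz on S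
  have hglip : LipschitzOnWith Km g S := by
    rw [lipschitzOnWith_iff_dist_le_mul]
    intro x hx y hy
    rw [Real.dist_eq, abs_sub_le_iff]
    constructor
    · obtain ⟨j0, hj0, hj0min⟩ := hmin y
      have h1 : g x ≤ f j0 x := ciInf_le (hbdd x) j0
      have h2 : f j0 x - f j0 y ≤ Km * dist x y := by
        have := (lipschitzOnWith_iff_dist_le_mul.1 (hKlip j0)) x hx y hy
        rw [Real.dist_eq] at this
        linarith [le_abs_self (f j0 x - f j0 y)]
      linarith
    · obtain ⟨j0, hj0, hj0min⟩ := hmin x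
      have h1 : g y ≤ f j0 y := ciInf_le (hbdd y) j0
      have h2 : f j0 y - f j0 x ≤ Km * dist x y := by
        have := (lipschitzOnWith_iff_dist_le_mul.1 (hKlip j0)) y hy x hx
        rw [Real.dist_eq, dist_comm y x] at this
        linarith [le_abs_self (f j0 y - f j0 x)]
      linarith
  have hrad := hglip.ae_differentiableWithinAt_of_mem (μ := volume)
  have h2 : ∀ᵐ t ∂(volume.restrict (Icc (0:ℝ) 1)),
      t ∈ S → DifferentiableWithinAt ℝ g S t := ae_restrict_of_ae hrad
  have h1 : ∀ᵐ t ∂(volume.restrict (Icc (0:ℝ) 1)), t ∈ Icc (0:ℝ) 1 :=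
    ae_restrict_mem measurableSet_Icc
  filter_upwards [h1, h2] with t ht hdiff
  have htS : t ∈ S := ⟨by linarith [ht.1], by linarith [ht.2]⟩
  have hnhds : S ∈ nhds t := Icc_mem_nhds (by linarith [ht.1]) (by linarith [ht.2])
  have hgt : DifferentiableAt ℝ g t := (hdiff htS).differentiableAt hnhds
  refine ⟨hgt, fun i hi => ?_⟩
  have hui : HasDerivAt u (deriv u t) t := ((hu.differentiable one_ne_zero) t).hasDerivAt
  have hfi : HasDerivAt (f i) ((fderiv ℝ (p i) (u t)) (deriv u t)) t :=
    (((hp i).differentiable one_ne_zero (u t)).hasFDerivAt).comp_hasDerivAt t hui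
  have hge : ∀ s, g s ≤ f i s := fun s => ciInf_le (hbdd s) i
  have hlm : IsLocalMin (fun s => f i s - g s) t := by
    apply Filter.Eventually.of_forall
    intro s
    show f i t - g t ≤ f i s - g s
    have heq : f i t = g t := hi
    linarith [hge s]
  have hz := hlm.deriv_eq_zero
  have hdsub : deriv (fun s => f i s - g s) t = deriv (f i) t - deriv g t :=
    deriv_sub hfi.differentiableAt hgt
  have hderivg : deriv g t = (fderiv ℝ (p i) (u t)) (deriv u t) := by
    rw [hdsub, hfi.deriv] at hz
    linarith
  have hgr : ⟪gradient (p i) (u t), deriv u t⟫ = (fderiv ℝ (p i) (u t)) (deriv u t) :=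
    InnerProductSpace.toDual_symm_apply
  rw [← hgr] at hderivg
  exact hderivg
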